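/- Let n ≥ 1 and s ≥ 3 be integers, let P_n(x) = (1/n!)·(d/dx)^n (x^n(1−x)^n) be the shifted Legendre polynomial, let Q_n(x) = (1−x)^n, and let T_n(x) = c₀ + c₁x + ⋯ + c_n x^n be a polynomial with arbitrary real coefficients. Then the s-fold integral I_s = ∫₀¹⋯∫₀¹ P_n(x₁)Q_n(x₂)T_n(x₃)/(1 − x₁x₂x₃⋯x_s) dx₁⋯dx_s equals (−1)^n · ∑_{k=n}^{∞} [k(k−1)⋯(k−n+1)/n!] · B(k+1, n+1)² · T(k,n) / (k+1)^{s−3}, where B denotes the Euler Beta function and T(k,n) = ∑_{i=0}^{n} c_i/(k+1+i). -/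

import Mathlib

open MeasureTheory Finset

/-- The shifted Legendre polynomial `P_n(x) = (1/n!) (d/dx)^n (x^n (1-x)^n)`. -/
noncomputable def shiftedLegendre (n : ℕ) (x : ℝ) : ℝ :=
  (1 / (n.factorial : ℝ)) * iteratedDeriv n (fun y : ℝ => y ^ n * (1 - y) ^ n) x

/-- The Euler Beta function `B(x, y) = Γ(x)Γ(y)/Γ(x+y)`. -/
noncomputable def eulerBeta (x y : ℝ) : ℝ :=
  Real.Gamma x * Real.Gamma y / Real.Gamma (x + y)

section Aux
open Polynomial intervalIntegral


lemma iteratedDeriv_polyeval (q : ℝ[X]) (m : ℕ) :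
    iteratedDeriv m (fun y : ℝ => q.eval y) = fun x => (derivative^[m] q).eval x := by
  induction m with
  | zero => simp
  | succ m ih =>
    rw [iteratedDeriv_succ, ih, Function.iterate_succ_apply']
    ext x
    exact Polynomial.deriv _


lemma parts_step (q : ℝ[X]) (hq0 : q.eval 0 = 0) (hq1 : q.eval 1 = 0) (k : ℕ) :
    ∫ x in (0:ℝ)..1, x ^ k * (derivative q).eval x
      = -(k:ℝ) * ∫ x in (0:ℝ)..1, x ^ (k-1) * q.eval x := by
  rcases Nat.eq_zero_or_pos k with hk | hk
  · subst hk
    simp only [pow_zero, one_mul, Nat.cast_zero, neg_zero, zero_mul]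
    rw [integral_eq_sub_of_hasDerivAt (f := fun y : ℝ => q.eval y)
      (fun x _ => q.hasDerivAt x) ((q.derivative.continuous_aeval).intervalIntegrable 0 1)]
    rw [hq0, hq1, sub_zero]
  · have h := integral_mul_deriv_eq_deriv_mul
      (u := fun x : ℝ => x ^ k) (u' := fun x : ℝ => k * x ^ (k-1))
      (v := fun y : ℝ => q.eval y) (v' := fun y : ℝ => (derivative q).eval y)
      (fun x _ => hasDerivAt_pow k x) (fun x _ => q.hasDerivAt x)
      (by apply Continuous.intervalIntegrable; continuity)
      ((q.derivative.continuous_aeval).intervalIntegrable 0 1)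
    rw [h]
    simp only [hq0, hq1, mul_zero, zero_mul, one_pow, one_mul, sub_zero, zero_sub]
    rw [← intervalIntegral.integral_neg, ← intervalIntegral.integral_const_mul]
    congr 1; ext x; ring


lemma parts_iter (m : ℕ) (q : ℝ[X])
    (hq : ∀ i < m, (derivative^[i] q).eval 0 = 0 ∧ (derivative^[i] q).eval 1 = 0) (k : ℕ) :
    ∫ x in (0:ℝ)..1, x ^ k * (derivative^[m] q).eval x
      = (∏ i ∈ range m, -((k:ℝ) - i)) * ∫ x in (0:ℝ)..1, x ^ (k - m) * q.eval x := by
  induction m generalizing k with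
  | zero => simp
  | succ m ih =>
    rw [Function.iterate_succ_apply',
      parts_step _ (hq m (Nat.lt_succ_self m)).1 (hq m (Nat.lt_succ_self m)).2 k,
      ih (fun i hi => hq i (hi.trans (Nat.lt_succ_self m))) (k-1)]
    rw [prod_range_succ']
    rcases Nat.eq_zero_or_pos k with rfl | hk
    · simp
    · obtain ⟨k', rfl⟩ := Nat.exists_eq_add_of_le hk
      have h1 : (1 + k') - 1 = k' := by omega
      have h2 : (1 + k') - (m+1) = k' - m := by omega
      rw [h1, h2]
      have hprod : ∀ i ∈ range m,
          -(((1+k' : ℕ):ℝ) - ((i+1 : ℕ):ℝ)) = -((k':ℝ) - (i:ℝ)) := by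
        intro i _; push_cast; ring
      rw [Finset.prod_congr rfl hprod]
      push_cast
      ring


lemma endpoints_vanish (n : ℕ) (i : ℕ) (hi : i < n) :
    (derivative^[i] ((X : ℝ[X])^n * (1 - X)^n)).eval 0 = 0 ∧
    (derivative^[i] ((X : ℝ[X])^n * (1 - X)^n)).eval 1 = 0 := by
  set q : ℝ[X] := (X : ℝ[X])^n * (1 - X)^n with hq
  have hqne : q ≠ 0 := by
    intro h
    have : q.eval 2⁻¹ = 0 := by rw [h]; simp
    rw [hq] at this
    simp only [eval_mul, eval_pow, eval_X, eval_sub, eval_one] at this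
    norm_num at this
  constructor
  · apply Polynomial.isRoot_iterate_derivative_of_lt_rootMultiplicity
    refine lt_of_lt_of_le hi ?_
    rw [Polynomial.le_rootMultiplicity_iff hqne]
    simpa [hq] using dvd_mul_right ((X:ℝ[X])^n) ((1-X)^n)
  · apply Polynomial.isRoot_iterate_derivative_of_lt_rootMultiplicity
    refine lt_of_lt_of_le hi ?_
    rw [Polynomial.le_rootMultiplicity_iff hqne]
    apply Dvd.dvd.mul_left
    apply pow_dvd_pow_of_dvd
    rw [show (1 : ℝ[X]) - X = -(X - C 1) by rw [Polynomial.C_1]; ring]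
    exact (dvd_neg).mpr dvd_rfl


lemma Jint (n : ℕ) : ∀ k : ℕ, ∫ x in (0:ℝ)..1, x ^ k * (1 - x) ^ n
    = (k.factorial * n.factorial : ℝ) / ((k + n + 1).factorial) := by
  induction n with
  | zero =>
    intro k
    simp only [pow_zero, mul_one, integral_pow, Nat.factorial_zero, Nat.cast_one]
    rw [show k + 0 + 1 = k + 1 by ring, Nat.factorial_succ]
    have h1 : (k.factorial : ℝ) ≠ 0 := by positivity
    push_cast
    rw [one_pow, zero_pow (by omega), sub_zero]
    field_simp
  | succ n ih =>
    intro k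
    have hd1 : ∀ x ∈ Set.uIcc (0:ℝ) 1, HasDerivAt (fun x : ℝ => (1-x)^(n+1))
        (-((n+1:ℝ) * (1-x)^n)) x := by
      intro x _
      have h := (hasDerivAt_pow (n+1) ((1:ℝ) - x)).comp x
        (((hasDerivAt_id x).const_sub 1))
      refine h.congr_deriv ?_
      simp only [Nat.add_sub_cancel]
      push_cast; ring
    have hd2 : ∀ x ∈ Set.uIcc (0:ℝ) 1, HasDerivAt (fun x : ℝ => x^(k+1)/(k+1))
        (x ^ k) x := by
      intro x _
      have h := (hasDerivAt_pow (k+1) x).div_const (k+1)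
      refine h.congr_deriv ?_
      simp only [Nat.add_sub_cancel]
      push_cast
      field_simp
    have h := integral_mul_deriv_eq_deriv_mul hd1 hd2
      (by apply Continuous.intervalIntegrable; continuity)
      (by apply Continuous.intervalIntegrable; continuity)
    -- h : ∫ (1-x)^(n+1) * x^k = ... - ∫ -((n+1)(1-x)^n) * (x^(k+1)/(k+1))
    rw [show (fun x : ℝ => x ^ k * (1-x)^(n+1)) = fun x : ℝ => (1-x)^(n+1) * x ^ k by
      ext x; ring] at *
    rw [h]
    simp only [sub_self, one_pow, zero_pow (Nat.succ_ne_zero n), zero_mul, mul_zero,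
      zero_pow (Nat.succ_ne_zero k), zero_div, sub_zero, zero_sub, sub_zero]
    rw [← intervalIntegral.integral_neg]
    have : (fun x : ℝ => -(-((n+1:ℝ) * (1-x)^n) * (x^(k+1)/(k+1))))
        = fun x : ℝ => ((n+1:ℝ)/(k+1)) * (x^(k+1) * (1-x)^n) := by
      ext x; field_simp
    rw [this, intervalIntegral.integral_const_mul, ih (k+1)]
    have e1 : k + 1 + n + 1 = k + (n+1) + 1 := by ring
    rw [Nat.factorial_succ k, Nat.factorial_succ n, e1]
    push_cast
    have hk : ((k:ℝ)+1) ≠ 0 := by positivity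
    have hf : ((k + (n+1) + 1).factorial : ℝ) ≠ 0 := by positivity
    field_simp


lemma shiftedLegendre_eq (n : ℕ) : _root_.shiftedLegendre n
    = fun x => (n.factorial : ℝ)⁻¹ * (derivative^[n] ((X : ℝ[X])^n * (1 - X)^n)).eval x := by
  have h : (fun y : ℝ => y ^ n * (1 - y) ^ n)
      = fun y : ℝ => ((X : ℝ[X])^n * (1 - X)^n).eval y := by
    funext y; simp
  funext x
  rw [_root_.shiftedLegendre, h, iteratedDeriv_polyeval, one_div]


lemma shiftedLegendre_continuous (n : ℕ) : Continuous (_root_.shiftedLegendre n) := by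
  rw [shiftedLegendre_eq]
  exact continuous_const.mul (Polynomial.continuous_aeval _)


lemma Aint (n k : ℕ) : ∫ x in (0:ℝ)..1, x ^ k * _root_.shiftedLegendre n x
    = (-1:ℝ)^n * (∏ i ∈ range n, ((k:ℝ) - i)) * (n.factorial : ℝ)⁻¹ *
      (((((k-n)+n).factorial * n.factorial : ℕ) : ℝ) / ((((k-n)+n) + n + 1).factorial)) := by
  rw [shiftedLegendre_eq]
  rw [show (fun x : ℝ => x ^ k * ((n.factorial : ℝ)⁻¹ *
      (derivative^[n] ((X : ℝ[X])^n * (1 - X)^n)).eval x))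
    = fun x : ℝ => (n.factorial : ℝ)⁻¹ *
      (x ^ k * (derivative^[n] ((X : ℝ[X])^n * (1 - X)^n)).eval x) by funext x; ring]
  rw [intervalIntegral.integral_const_mul, parts_iter n _ (fun i hi => endpoints_vanish n i hi) k]
  have hx : ∀ x : ℝ, x ^ (k - n) * ((X : ℝ[X])^n * (1 - X)^n).eval x
      = x ^ ((k-n) + n) * (1 - x)^n := by
    intro x
    simp [pow_add]
    ring
  simp only [hx]
  rw [Jint n (k-n+n)]
  have hprod : (∏ i ∈ range n, -((k:ℝ) - i)) = (-1:ℝ)^n * ∏ i ∈ range n, ((k:ℝ) - i) := by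
    rw [show (fun i : ℕ => -((k:ℝ) - i)) = fun i : ℕ => (-1) * ((k:ℝ) - i) by funext i; ring]
    rw [prod_mul_distrib, prod_const, card_range]
  rw [hprod]
  push_cast
  ring


lemma eulerBeta_nat (k n : ℕ) : eulerBeta ((k:ℝ)+1) ((n:ℝ)+1)
    = ((k.factorial * n.factorial : ℕ) : ℝ) / ((k + n + 1).factorial) := by
  rw [eulerBeta]
  have h1 : ((k:ℝ)+1) + ((n:ℝ)+1) = ((k+n+1 : ℕ):ℝ) + 1 := by push_cast; ring
  rw [h1, Real.Gamma_nat_eq_factorial, Real.Gamma_nat_eq_factorial,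
    Real.Gamma_nat_eq_factorial]
  push_cast
  ring


lemma int_Icc_eq_intervalIntegral (f : ℝ → ℝ) :
    ∫ y in Set.Icc (0:ℝ) 1, f y = ∫ y in (0:ℝ)..1, f y := by
  rw [intervalIntegral.integral_of_le (by norm_num : (0:ℝ) ≤ 1),
    ← MeasureTheory.integral_Icc_eq_integral_Ioc]


lemma Cint (n k : ℕ) (c : ℕ → ℝ) : ∫ x in (0:ℝ)..1, x ^ k * (∑ i ∈ range (n+1), c i * x ^ i)
    = ∑ i ∈ range (n+1), c i / ((k:ℝ) + 1 + i) := by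
  rw [show (fun x : ℝ => x ^ k * (∑ i ∈ range (n+1), c i * x ^ i))
    = fun x : ℝ => ∑ i ∈ range (n+1), c i * x ^ (k+i) by
      funext x; rw [Finset.mul_sum]; apply Finset.sum_congr rfl; intro i _; rw [pow_add]; ring]
  rw [intervalIntegral.integral_finset_sum]
  · apply Finset.sum_congr rfl
    intro i _
    rw [intervalIntegral.integral_const_mul, integral_pow]
    rw [one_pow, zero_pow (by omega), sub_zero]
    rw [div_eq_mul_inv, div_eq_mul_inv]
    congr 2
    push_cast
    ring
  · intro i _
    apply Continuous.intervalIntegrable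
    continuity


lemma Dint (k : ℕ) : ∫ x in (0:ℝ)..1, x ^ k = 1 / ((k:ℝ)+1) := by
  rw [integral_pow, one_pow, zero_pow (by omega), sub_zero]


lemma Dint' (k : ℕ) : ∫ y in Set.Icc (0:ℝ) 1, y ^ k = 1 / ((k:ℝ)+1) := by
  rw [int_Icc_eq_intervalIntegral, Dint]

lemma cube_integral_prod (s : ℕ) (g : Fin s → ℝ → ℝ) :
    ∫ x in Set.Icc (0 : Fin s → ℝ) 1, ∏ i, g i (x i)
      = ∏ i, ∫ y in Set.Icc (0:ℝ) 1, g i y := by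
  rw [← MeasureTheory.integral_indicator measurableSet_Icc]
  have hind : (Set.Icc (0:Fin s → ℝ) 1).indicator (fun x => ∏ i, g i (x i))
      = fun x => ∏ i, (Set.Icc (0:ℝ) 1).indicator (g i) (x i) := by
    funext x
    by_cases hx : x ∈ Set.Icc (0:Fin s → ℝ) 1
    · rw [Set.indicator_of_mem hx]
      rw [Set.mem_Icc] at hx
      exact Finset.prod_congr rfl (fun i _ =>
        (Set.indicator_of_mem (Set.mem_Icc.mpr ⟨hx.1 i, hx.2 i⟩) _).symm)
    · rw [Set.indicator_of_notMem hx]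
      have hex : ∃ i, x i ∉ Set.Icc (0:ℝ) 1 := by
        by_contra h
        push_neg at h
        exact hx (Set.mem_Icc.mpr ⟨fun i => (Set.mem_Icc.mp (h i)).1,
          fun i => (Set.mem_Icc.mp (h i)).2⟩)
      obtain ⟨i, hi⟩ := hex
      symm
      apply Finset.prod_eq_zero (Finset.mem_univ i)
      rw [Set.indicator_of_notMem hi]
  rw [hind]
  beta_reduce
  rw [volume_pi, MeasureTheory.integral_fintype_prod_eq_prod (ι := Fin s)
      (f := fun i => (Set.Icc (0:ℝ) 1).indicator (g i))]
  exact Finset.prod_congr rfl fun i _ => MeasureTheory.integral_indicator measurableSet_Icc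


lemma prod_split {α : Type*} [Fintype α] [DecidableEq α] (a b c : α)
    (hab : a ≠ b) (hac : a ≠ c) (hbc : b ≠ c) (F : α → ℝ) (D : ℝ)
    (hF : ∀ i, i ≠ a → i ≠ b → i ≠ c → F i = D) :
    ∏ i, F i = F a * F b * F c * D ^ (Fintype.card α - 3) := by
  have hsub : ({a, b, c} : Finset α) ⊆ Finset.univ := Finset.subset_univ _
  rw [← Finset.prod_sdiff hsub]
  have h1 : ∏ i ∈ ({a,b,c} : Finset α), F i = F a * (F b * F c) := by
    rw [Finset.prod_insert (by simp [hab, hac]),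
      Finset.prod_insert (by simp [hbc]), Finset.prod_singleton]
  have h2 : ∏ i ∈ Finset.univ \ {a,b,c}, F i = D ^ (Fintype.card α - 3) := by
    rw [Finset.prod_congr rfl (g := fun _ => D) (fun i hi => by
      simp only [Finset.mem_sdiff, Finset.mem_insert, Finset.mem_singleton] at hi
      push_neg at hi
      exact hF i hi.2.1 hi.2.2.1 hi.2.2.2), Finset.prod_const]
    congr 1
    rw [Finset.card_sdiff_of_subset hsub, Finset.card_univ]
    congr 1
    rw [Finset.card_insert_of_notMem (by simp [hab,hac]),
      Finset.card_insert_of_notMem (by simp [hbc]), Finset.card_singleton]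
  rw [h1, h2]
  ring


lemma cube_swap (s : ℕ) (hs : 3 ≤ s) (N : (Fin s → ℝ) → ℝ) (hN : Continuous N) :
    (∫ x in Set.Icc (0 : Fin s → ℝ) 1, N x / (1 - ∏ i, x i)
      = ∑' k : ℕ, ∫ x in Set.Icc (0 : Fin s → ℝ) 1, (∏ i, x i)^k * N x)
    ∧ Summable (fun k : ℕ => ∫ x in Set.Icc (0 : Fin s → ℝ) 1, (∏ i, x i)^k * N x) := by
  have hne : (0 : Fin s → ℝ) ∈ Set.Icc (0 : Fin s → ℝ) 1 :=
    Set.mem_Icc.mpr ⟨le_refl _, zero_le_one⟩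
  -- coordinates in cube
  have hcoord : ∀ x ∈ Set.Icc (0 : Fin s → ℝ) 1, ∀ i, 0 ≤ x i ∧ x i ≤ 1 := by
    intro x hx i
    rw [Set.mem_Icc] at hx
    exact ⟨hx.1 i, hx.2 i⟩
  -- integrability of each term
  have hHcont : ∀ k : ℕ, Continuous (fun x : Fin s → ℝ => (∏ i, x i)^k * N x) := by
    intro k
    exact ((continuous_finset_prod _ (fun i _ => continuous_apply i)).pow k).mul hN
  have hHint : ∀ k : ℕ, IntegrableOn (fun x : Fin s → ℝ => (∏ i, x i)^k * N x)
      (Set.Icc 0 1) := fun k => ((hHcont k).continuousOn).integrableOn_compact isCompact_Icc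
  -- bound
  obtain ⟨C, hC⟩ := (isCompact_Icc (a := (0 : Fin s → ℝ)) (b := 1)).exists_bound_of_continuousOn
    hN.continuousOn
  have hC0 : 0 ≤ C := le_trans (norm_nonneg _) (hC 0 hne)
  -- value of ∫ (∏ x)^k over cube
  have hDk : ∀ k : ℕ, ∫ x in Set.Icc (0 : Fin s → ℝ) 1, (∏ i, x i)^k
      = (1 / ((k:ℝ)+1))^s := by
    intro k
    have : (fun x : Fin s → ℝ => (∏ i, x i)^k) = fun x => ∏ i, (x i)^k := by
      funext x; rw [← Finset.prod_pow]
    rw [this, cube_integral_prod s (fun _ y => y ^ k)]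
    simp only [Dint' k]
    rw [Finset.prod_const, Finset.card_univ, Fintype.card_fin]
  -- norm integral bound
  have hbound : ∀ k : ℕ, (∫ x in Set.Icc (0 : Fin s → ℝ) 1, ‖(∏ i, x i)^k * N x‖)
      ≤ C * (1 / ((k:ℝ)+1))^s := by
    intro k
    have h1 : ∀ x ∈ Set.Icc (0 : Fin s → ℝ) 1,
        ‖(∏ i, x i)^k * N x‖ ≤ C * (∏ i, x i)^k := by
      intro x hx
      have hp : (0:ℝ) ≤ ∏ i, x i := Finset.prod_nonneg fun i _ => (hcoord x hx i).1
      rw [norm_mul, Real.norm_eq_abs ((∏ i, x i)^k), abs_of_nonneg (pow_nonneg hp k)]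
      rw [mul_comm C]
      exact mul_le_mul_of_nonneg_left (hC x hx) (pow_nonneg hp k)
    calc (∫ x in Set.Icc (0 : Fin s → ℝ) 1, ‖(∏ i, x i)^k * N x‖)
        ≤ ∫ x in Set.Icc (0 : Fin s → ℝ) 1, C * (∏ i, x i)^k := by
          apply setIntegral_mono_on ((hHint k).norm)
          · exact (continuous_const.mul ((continuous_finset_prod _
              (fun i _ => continuous_apply i)).pow k)).continuousOn.integrableOn_compact
              isCompact_Icc
          · exact measurableSet_Icc
          · exact h1
      _ = C * (1 / ((k:ℝ)+1))^s := by rw [MeasureTheory.integral_const_mul, hDk k]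
  -- summability
  have hsummax : Summable (fun k : ℕ => C * (1 / ((k:ℝ)+1))^s) := by
    apply Summable.mul_left
    have h2 : Summable (fun k : ℕ => 1/((k:ℝ))^s) :=
      (Real.summable_one_div_nat_pow).mpr (by omega)
    have h3 := (summable_nat_add_iff 1).mpr h2
    apply h3.congr
    intro k
    push_cast
    rw [div_pow, one_pow]
  have hsumm : Summable (fun k : ℕ =>
      ∫ x in Set.Icc (0 : Fin s → ℝ) 1, ‖(∏ i, x i)^k * N x‖) := by
    apply Summable.of_nonneg_of_le (fun k => integral_nonneg (fun x => norm_nonneg _))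
      hbound hsummax
  -- a.e. equality
  have hae : ∀ᵐ x : Fin s → ℝ, x ∈ Set.Icc (0 : Fin s → ℝ) 1 →
      N x / (1 - ∏ i, x i) = ∑' k : ℕ, (∏ i, x i)^k * N x := by
    have h1 : (volume : Measure (Fin s → ℝ)) {(1 : Fin s → ℝ)} = 0 := by
      rw [← Set.univ_pi_singleton, volume_pi_pi]
      rw [Finset.prod_eq_zero (Finset.mem_univ (⟨0, by omega⟩ : Fin s))]
      exact Real.volume_singleton
    have h2 : ∀ᵐ x : Fin s → ℝ, x ≠ 1 := by
      rw [MeasureTheory.ae_iff]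
      simpa using h1
    filter_upwards [h2] with x hx hmem
    have hr0 : (0:ℝ) ≤ ∏ i, x i := Finset.prod_nonneg fun i _ => (hcoord x hmem i).1
    have hr1 : (∏ i, x i) < 1 := by
      rcases lt_or_eq_of_le (Finset.prod_le_one (fun i _ => (hcoord x hmem i).1)
        (fun i _ => (hcoord x hmem i).2)) with h | h
      · exact h
      · exfalso
        apply hx
        funext i
        by_contra hne
        have hlt : x i < 1 := lt_of_le_of_ne (hcoord x hmem i).2
          (by simpa using hne)
        have : (∏ j, x j) ≤ x i := by
          calc (∏ j, x j) = x i * ∏ j ∈ Finset.univ.erase i, x j :=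
                (Finset.mul_prod_erase Finset.univ x (Finset.mem_univ i)).symm
            _ ≤ x i * 1 := mul_le_mul_of_nonneg_left
                (Finset.prod_le_one (fun j _ => (hcoord x hmem j).1)
                  (fun j _ => (hcoord x hmem j).2)) (hcoord x hmem i).1
            _ = x i := mul_one _
        linarith
    rw [tsum_mul_right, tsum_geometric_of_lt_one hr0 hr1, div_eq_mul_inv, mul_comm]
  constructor
  · rw [MeasureTheory.setIntegral_congr_ae measurableSet_Icc hae]
    exact (MeasureTheory.integral_tsum_of_summable_integral_norm hHint hsumm).symm
  · exact Summable.of_norm_bounded hsumm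
      (fun k => MeasureTheory.norm_integral_le_integral_norm _)

end Aux


/-- For `n ≥ 1`, `s ≥ 3`, `P_n` the shifted Legendre polynomial, `Q_n(x) = (1-x)^n` and
`T_n(x) = ∑ cᵢ xⁱ`, the `s`-fold integral of `P_n(x₁)Q_n(x₂)T_n(x₃)/(1-x₁⋯x_s)` over the
unit cube equals
`(-1)^n ∑_{k=n}^∞ [k(k-1)⋯(k-n+1)/n!] B(k+1,n+1)² T(k,n)/(k+1)^{s-3}`,
with `T(k,n) = ∑_{i=0}^n cᵢ/(k+1+i)` (written below with `k = n + j`, `j ≥ 0`). -/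
theorem stmt_15 (n s : ℕ) (hn : 1 ≤ n) (hs : 3 ≤ s) (c : ℕ → ℝ) :
    (∫ x in Set.Icc (0 : Fin s → ℝ) 1,
        shiftedLegendre n (x ⟨0, by omega⟩) * (1 - x ⟨1, by omega⟩) ^ n *
          (∑ i ∈ range (n + 1), c i * x ⟨2, by omega⟩ ^ i) /
          (1 - ∏ i, x i)) =
      (-1 : ℝ) ^ n *
        ∑' j : ℕ,
          (∏ i ∈ range n, (((n + j : ℕ) : ℝ) - i)) / (n.factorial : ℝ) *
            eulerBeta ((n + j : ℕ) + 1) (n + 1) ^ 2 *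
            (∑ i ∈ range (n + 1), c i / (((n + j : ℕ) : ℝ) + 1 + i)) /
            (((n + j : ℕ) : ℝ) + 1) ^ (s - 3) := by
  set i0 : Fin s := ⟨0, by omega⟩ with hi0
  set i1 : Fin s := ⟨1, by omega⟩ with hi1
  set i2 : Fin s := ⟨2, by omega⟩ with hi2
  have h01 : i0 ≠ i1 := by rw [hi0, hi1]; simp [Fin.ext_iff]
  have h02 : i0 ≠ i2 := by rw [hi0, hi2]; simp [Fin.ext_iff]
  have h12 : i1 ≠ i2 := by rw [hi1, hi2]; simp [Fin.ext_iff]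
  have hcontN : Continuous (fun x : Fin s → ℝ =>
      shiftedLegendre n (x i0) * (1 - x i1)^n * (∑ i ∈ range (n+1), c i * (x i2)^i)) := by
    refine Continuous.mul (Continuous.mul ?_ ?_) ?_
    · exact (shiftedLegendre_continuous n).comp (continuous_apply i0)
    · exact (continuous_const.sub (continuous_apply i1)).pow n
    · exact continuous_finset_sum _ fun i _ => continuous_const.mul ((continuous_apply i2).pow i)
  have hswap : (∫ x in Set.Icc (0 : Fin s → ℝ) 1,
        shiftedLegendre n (x i0) * (1 - x i1) ^ n *
          (∑ i ∈ range (n + 1), c i * x i2 ^ i) / (1 - ∏ i, x i))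
      = ∑' k : ℕ, ∫ x in Set.Icc (0 : Fin s → ℝ) 1, (∏ i, x i)^k *
          (shiftedLegendre n (x i0) * (1 - x i1) ^ n *
            (∑ i ∈ range (n + 1), c i * x i2 ^ i)) :=
    (cube_swap s hs _ hcontN).1
  have hsummable : Summable (fun k : ℕ =>
      ∫ x in Set.Icc (0 : Fin s → ℝ) 1, (∏ i, x i)^k *
        (shiftedLegendre n (x i0) * (1 - x i1) ^ n *
          (∑ i ∈ range (n + 1), c i * x i2 ^ i))) :=
    (cube_swap s hs _ hcontN).2
  rw [hswap]
  set h : Fin s → ℝ → ℝ := fun i y =>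
    if i = i0 then shiftedLegendre n y else if i = i1 then (1-y)^n
    else if i = i2 then (∑ j ∈ range (n+1), c j * y^j) else 1 with hhdef
  have hterm : ∀ k : ℕ, (∫ x in Set.Icc (0 : Fin s → ℝ) 1, (∏ i, x i)^k *
        (shiftedLegendre n (x i0) * (1 - x i1) ^ n *
          (∑ i ∈ range (n + 1), c i * x i2 ^ i)))
      = ((-1:ℝ)^n * (∏ i ∈ range n, ((k:ℝ) - i)) * (n.factorial : ℝ)⁻¹ *
          (((((k-n)+n).factorial * n.factorial : ℕ) : ℝ) / ((((k-n)+n) + n + 1).factorial)))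
        * (((k.factorial * n.factorial : ℕ) : ℝ) / ((k + n + 1).factorial))
        * (∑ i ∈ range (n+1), c i / ((k:ℝ) + 1 + i))
        * (1 / ((k:ℝ)+1))^(s-3) := by
    intro k
    have hpoint : ∀ x : Fin s → ℝ, (∏ i, x i)^k *
        (shiftedLegendre n (x i0) * (1 - x i1) ^ n *
          (∑ i ∈ range (n + 1), c i * x i2 ^ i))
        = ∏ i, (x i)^k * h i (x i) := by
      intro x
      rw [Finset.prod_mul_distrib, Finset.prod_pow]
      congr 1
      rw [prod_split i0 i1 i2 h01 h02 h12 (fun i => h i (x i)) 1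
        (fun i hne0 hne1 hne2 => by simp only [hhdef, if_neg hne0, if_neg hne1, if_neg hne2])]
      simp only [hhdef, if_pos rfl, if_neg (Ne.symm h01), if_neg (Ne.symm h02),
        if_neg (Ne.symm h12), if_true, one_pow, mul_one]
    simp only [hpoint]
    have hfub := cube_integral_prod s (fun i y => y^k * h i y)
    beta_reduce at hfub
    rw [hfub]
    have hD : ∀ i : Fin s, i ≠ i0 → i ≠ i1 → i ≠ i2 →
        (∫ y in Set.Icc (0:ℝ) 1, y^k * h i y) = 1 / ((k:ℝ)+1) := by
      intro i hne0 hne1 hne2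
      simp only [hhdef, if_neg hne0, if_neg hne1, if_neg hne2, mul_one]
      exact Dint' k
    rw [prod_split i0 i1 i2 h01 h02 h12 (fun i => ∫ y in Set.Icc (0:ℝ) 1, y^k * h i y)
      (1/((k:ℝ)+1)) hD]
    have hF0 : (∫ y in Set.Icc (0:ℝ) 1, y^k * h i0 y)
        = (-1:ℝ)^n * (∏ i ∈ range n, ((k:ℝ) - i)) * (n.factorial : ℝ)⁻¹ *
          (((((k-n)+n).factorial * n.factorial : ℕ) : ℝ) / ((((k-n)+n) + n + 1).factorial)) := by
      simp only [hhdef, if_pos rfl]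
      rw [int_Icc_eq_intervalIntegral, Aint n k]
    have hF1 : (∫ y in Set.Icc (0:ℝ) 1, y^k * h i1 y)
        = (((k.factorial * n.factorial : ℕ) : ℝ) / ((k + n + 1).factorial)) := by
      simp only [hhdef, if_neg (Ne.symm h01), if_true]
      rw [int_Icc_eq_intervalIntegral, Jint n k]
      push_cast; ring
    have hF2 : (∫ y in Set.Icc (0:ℝ) 1, y^k * h i2 y)
        = ∑ i ∈ range (n+1), c i / ((k:ℝ) + 1 + i) := by
      simp only [hhdef, if_neg (Ne.symm h02), if_neg (Ne.symm h12), if_true]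
      rw [int_Icc_eq_intervalIntegral, Cint n k c]
    rw [hF0, hF1, hF2, Fintype.card_fin]
  rw [tsum_congr hterm]
  have hsum2 : Summable (fun k : ℕ =>
      ((-1:ℝ)^n * (∏ i ∈ range n, ((k:ℝ) - i)) * (n.factorial : ℝ)⁻¹ *
          (((((k-n)+n).factorial * n.factorial : ℕ) : ℝ) / ((((k-n)+n) + n + 1).factorial)))
        * (((k.factorial * n.factorial : ℕ) : ℝ) / ((k + n + 1).factorial))
        * (∑ i ∈ range (n+1), c i / ((k:ℝ) + 1 + i))
        * (1 / ((k:ℝ)+1))^(s-3)) := hsummable.congr hterm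
  rw [← hsum2.sum_add_tsum_nat_add n]
  have hzero : ∑ k ∈ range n,
      (((-1:ℝ)^n * (∏ i ∈ range n, ((k:ℝ) - i)) * (n.factorial : ℝ)⁻¹ *
          (((((k-n)+n).factorial * n.factorial : ℕ) : ℝ) / ((((k-n)+n) + n + 1).factorial)))
        * (((k.factorial * n.factorial : ℕ) : ℝ) / ((k + n + 1).factorial))
        * (∑ i ∈ range (n+1), c i / ((k:ℝ) + 1 + i))
        * (1 / ((k:ℝ)+1))^(s-3)) = 0 := by
    apply Finset.sum_eq_zero
    intro k hk
    have hp : (∏ i ∈ range n, ((k:ℝ) - i)) = 0 :=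
      Finset.prod_eq_zero hk (by rw [sub_self])
    simp [hp]
  rw [hzero, zero_add, ← tsum_mul_left]
  apply tsum_congr
  intro j
  rw [Nat.add_comm j n]
  have e1 : (n + j) - n + n = n + j := by omega
  rw [e1, eulerBeta_nat (n+j) n]
  push_cast
  ring
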